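/- There exists a constant C > 0 such that for every B ≥ 0, every ε ∈ (0,1), every i ∈ {1,2}, every p ∈ ℝ and every k with 0 < |k| ≤ 1/2 and ε|p| < |k|, one has |ω_{i,B}(k + εp/2) − ω_{i,B}(k − εp/2) − εp·v_B(k)| ≤ C·ε²·p²/|k|. -/

import Mathlib

/-- `α̂(k) = 4 sin²(πk)`. -/
noncomputable def alphaHat (k : ℝ) : ℝ := 4 * Real.sin (Real.pi * k) ^ 2

/-- `ω_{i,B}(k) = √(α̂(k) + B²/4) ± B/2` (plus sign for `i = 1`, minus for `i = 2`). -/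
noncomputable def omegaF (B : ℝ) (i : ℕ) (k : ℝ) : ℝ :=
  Real.sqrt (alphaHat k + B ^ 2 / 4) + (if i = 1 then B / 2 else -(B / 2))

/-- `v_B(k) = α̂′(k)/(2√(α̂(k) + B²/4))`. -/
noncomputable def vF (B : ℝ) (k : ℝ) : ℝ :=
  deriv alphaHat k / (2 * Real.sqrt (alphaHat k + B ^ 2 / 4))

noncomputable def sqF (B : ℝ) (y : ℝ) : ℝ := Real.sqrt (alphaHat y + B ^ 2 / 4)

noncomputable def gF (B : ℝ) (x : ℝ) : ℝ :=
  8 * Real.pi * (Real.sin (Real.pi * x) * Real.cos (Real.pi * x)) / (2 * sqF B x)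

lemma hasDerivAt_alphaHat (x : ℝ) :
    HasDerivAt alphaHat (8 * Real.pi * (Real.sin (Real.pi * x) * Real.cos (Real.pi * x))) x := by
  have h1 : HasDerivAt (fun y : ℝ => Real.pi * y) Real.pi x := by
    simpa using (hasDerivAt_id x).const_mul Real.pi
  have h2 : HasDerivAt (fun y : ℝ => Real.sin (Real.pi * y))
      (Real.cos (Real.pi * x) * Real.pi) x := (Real.hasDerivAt_sin (Real.pi * x)).comp x h1
  have h3 := (h2.pow 2).const_mul (4 : ℝ)
  have he : alphaHat = fun y : ℝ => 4 * Real.sin (Real.pi * y) ^ 2 := rfl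
  rw [he]
  exact h3.congr_deriv (by
    simp
    ring)

lemma hasDerivAt_sqF (B x : ℝ) (hx : 0 < alphaHat x + B ^ 2 / 4) :
    HasDerivAt (sqF B) (gF B x) x := by
  have h1 := (hasDerivAt_alphaHat x).add_const (B ^ 2 / 4)
  have h2 := (Real.hasDerivAt_sqrt hx.ne').comp x h1
  have he : sqF B = fun y : ℝ => Real.sqrt (alphaHat y + B ^ 2 / 4) := rfl
  rw [he]
  exact h2.congr_deriv (by
    unfold gF sqF
    ring)

lemma sin_pi_lb_nonneg {y : ℝ} (h0 : 0 ≤ y) (h1 : y ≤ 3 / 4) :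
    2 / 3 * y ≤ Real.sin (Real.pi * y) := by
  have hpi := Real.pi_pos
  rcases le_total y (1 / 2) with h | h
  · have h2 : Real.pi * y ≤ Real.pi / 2 := by nlinarith
    have h3 := Real.mul_le_sin (x := Real.pi * y) (by positivity) h2
    have h4 : 2 / Real.pi * (Real.pi * y) = 2 * y := by field_simp
    rw [h4] at h3
    linarith
  · have h2 : Real.sin (Real.pi * y) = Real.sin (Real.pi * (1 - y)) := by
      rw [show Real.pi * (1 - y) = Real.pi - Real.pi * y by ring, Real.sin_pi_sub]
    have h3 : (0 : ℝ) ≤ 1 - y := by linarith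
    have h4 : Real.pi * (1 - y) ≤ Real.pi / 2 := by nlinarith
    have h5 := Real.mul_le_sin (x := Real.pi * (1 - y)) (by positivity) h4
    have h6 : 2 / Real.pi * (Real.pi * (1 - y)) = 2 * (1 - y) := by field_simp
    rw [h6] at h5
    rw [h2]
    linarith

lemma sin_pi_lb {y : ℝ} (hy : |y| ≤ 3 / 4) : 2 / 3 * |y| ≤ |Real.sin (Real.pi * y)| := by
  rcases le_total 0 y with h | h
  · rw [abs_of_nonneg h]
    exact (sin_pi_lb_nonneg h (by rwa [abs_of_nonneg h] at hy)).trans (le_abs_self _)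
  · rw [abs_of_nonpos h]
    have h2 : Real.sin (Real.pi * y) = -Real.sin (Real.pi * -y) := by
      rw [mul_neg, Real.sin_neg, neg_neg]
    rw [h2, abs_neg]
    exact (sin_pi_lb_nonneg (by linarith) (by rwa [abs_of_nonpos h] at hy)).trans (le_abs_self _)

lemma sqrt_alpha_eq (y : ℝ) : Real.sqrt (alphaHat y) = 2 * |Real.sin (Real.pi * y)| := by
  have h : alphaHat y = (2 * Real.sin (Real.pi * y)) ^ 2 := by unfold alphaHat; ring
  rw [h, Real.sqrt_sq_eq_abs, abs_mul]
  norm_num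

lemma sqF_ge_sin (B y : ℝ) : 2 * |Real.sin (Real.pi * y)| ≤ sqF B y := by
  rw [← sqrt_alpha_eq]
  exact Real.sqrt_le_sqrt (by nlinarith [sq_nonneg B])

lemma sin_diff (a b : ℝ) : |Real.sin a - Real.sin b| ≤ |a - b| := by
  rw [Real.sin_sub_sin, abs_mul, abs_mul]
  have h1 : |Real.sin ((a - b) / 2)| ≤ |(a - b) / 2| := Real.abs_sin_le_abs
  have h2 : |Real.cos ((a + b) / 2)| ≤ 1 := Real.abs_cos_le_one _
  have h3 : |(a - b) / 2| = |a - b| / 2 := by rw [abs_div]; norm_num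
  have h4 : (0:ℝ) ≤ |Real.sin ((a - b) / 2)| := abs_nonneg _
  have h5 : (0:ℝ) ≤ |a - b| := abs_nonneg _
  rw [abs_two]
  nlinarith

lemma region_abs {k x : ℝ} (hx : |x - k| ≤ |k| / 2) : |k| / 2 ≤ |x| ∧ |x| ≤ 3 / 2 * |k| := by
  constructor
  · have h := abs_sub_abs_le_abs_sub k x
    rw [abs_sub_comm] at h
    linarith
  · have h := abs_sub_abs_le_abs_sub x k
    linarith

lemma sqF_region_lb {B k x : ℝ} (hk0 : 0 < |k|) (hk : |k| ≤ 1 / 2) (hx : |x - k| ≤ |k| / 2) :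
    2 / 3 * |k| ≤ sqF B x := by
  obtain ⟨h1, h2⟩ := region_abs hx
  have hx34 : |x| ≤ 3 / 4 := by linarith
  have h3 := sin_pi_lb hx34
  have h4 := sqF_ge_sin B x
  linarith

lemma u_region_pos {B k x : ℝ} (hk0 : 0 < |k|) (hk : |k| ≤ 1 / 2) (hx : |x - k| ≤ |k| / 2) :
    0 < alphaHat x + B ^ 2 / 4 := by
  have h := sqF_region_lb (B := B) hk0 hk hx
  have h2 : 0 < sqF B x := by linarith
  exact Real.sqrt_pos.mp h2

lemma kk_le {k : ℝ} : |k - k| ≤ |k| / 2 := by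
  rw [sub_self, abs_zero]; positivity

set_option maxHeartbeats 1000000 in
lemma key_lip {B k x : ℝ} (hk0 : 0 < |k|) (hk : |k| ≤ 1 / 2) (hx : |x - k| ≤ |k| / 2) :
    |gF B x - gF B k| ≤ 400 * |x - k| / |k| := by
  have hpi := Real.pi_pos
  have hp2 : Real.pi ^ 2 ≤ 16 := by nlinarith [Real.pi_le_four]
  set sa := sqF B x with hsa_def
  set sb := sqF B k with hsb_def
  have hsalb : 2 / 3 * |k| ≤ sa := sqF_region_lb hk0 hk hx
  have hsblb : 2 / 3 * |k| ≤ sb := sqF_region_lb hk0 hk kk_le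
  have hsa0 : 0 < sa := by linarith
  have hsb0 : 0 < sb := by linarith
  have hsax : 2 * |Real.sin (Real.pi * x)| ≤ sa := sqF_ge_sin B x
  have hsbk : 2 * |Real.sin (Real.pi * k)| ≤ sb := sqF_ge_sin B k
  set A := 8 * Real.pi * (Real.sin (Real.pi * x) * Real.cos (Real.pi * x)) with hA_def
  set Ak := 8 * Real.pi * (Real.sin (Real.pi * k) * Real.cos (Real.pi * k)) with hAk_def
  -- bound |A - Ak|
  have hAd : |A - Ak| ≤ 8 * Real.pi ^ 2 * |x - k| := by
    have e1 : A - Ak = 4 * Real.pi * (Real.sin (2 * (Real.pi * x)) - Real.sin (2 * (Real.pi * k))) := by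
      rw [Real.sin_two_mul, Real.sin_two_mul]; ring
    have e2 : |Real.sin (2 * (Real.pi * x)) - Real.sin (2 * (Real.pi * k))| ≤ 2 * Real.pi * |x - k| := by
      have h5 := sin_diff (2 * (Real.pi * x)) (2 * (Real.pi * k))
      have e3 : |2 * (Real.pi * x) - 2 * (Real.pi * k)| = 2 * Real.pi * |x - k| := by
        rw [show 2 * (Real.pi * x) - 2 * (Real.pi * k) = (2 * Real.pi) * (x - k) by ring,
          abs_mul, abs_of_pos (by positivity : (0:ℝ) < 2 * Real.pi)]
      linarith [e3 ▸ h5]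
    calc |A - Ak| = 4 * Real.pi * |Real.sin (2 * (Real.pi * x)) - Real.sin (2 * (Real.pi * k))| := by
          rw [e1, abs_mul, abs_of_pos (by positivity : (0:ℝ) < 4 * Real.pi)]
      _ ≤ 4 * Real.pi * (2 * Real.pi * |x - k|) :=
          mul_le_mul_of_nonneg_left e2 (by positivity)
      _ = 8 * Real.pi ^ 2 * |x - k| := by ring
  -- bound |Ak|
  have hAkb : |Ak| ≤ 4 * Real.pi * sb := by
    have e : |Ak| = 8 * Real.pi * (|Real.sin (Real.pi * k)| * |Real.cos (Real.pi * k)|) := by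
      rw [hAk_def, abs_mul, abs_mul, abs_mul]
      rw [abs_of_pos hpi, show |(8:ℝ)| = 8 by norm_num]
    rw [e]
    have hc := Real.abs_cos_le_one (Real.pi * k)
    have h1 : 8 * Real.pi * (|Real.sin (Real.pi * k)| * |Real.cos (Real.pi * k)|) ≤
        8 * Real.pi * |Real.sin (Real.pi * k)| := by
      have := mul_le_mul_of_nonneg_left hc (abs_nonneg (Real.sin (Real.pi * k)))
      nlinarith [abs_nonneg (Real.sin (Real.pi * k))]
    have h2 : 8 * Real.pi * |Real.sin (Real.pi * k)| ≤ 4 * Real.pi * sb := by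
      nlinarith [mul_le_mul_of_nonneg_left hsbk (by positivity : (0:ℝ) ≤ 4 * Real.pi)]
    linarith
  -- bound |sb - sa|
  have hsd : |sb - sa| ≤ 2 * Real.pi * |x - k| := by
    have hsq1 : sa ^ 2 = alphaHat x + B ^ 2 / 4 := Real.sq_sqrt (u_region_pos hk0 hk hx).le
    have hsq2 : sb ^ 2 = alphaHat k + B ^ 2 / 4 := Real.sq_sqrt (u_region_pos hk0 hk kk_le).le
    have e1 : sb ^ 2 - sa ^ 2 = 4 * (Real.sin (Real.pi * k) - Real.sin (Real.pi * x)) *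
        (Real.sin (Real.pi * k) + Real.sin (Real.pi * x)) := by
      rw [hsq1, hsq2]; unfold alphaHat; ring
    have d1 : |Real.sin (Real.pi * k) - Real.sin (Real.pi * x)| ≤ Real.pi * |x - k| := by
      have h5 := sin_diff (Real.pi * k) (Real.pi * x)
      have e3 : |Real.pi * k - Real.pi * x| = Real.pi * |x - k| := by
        rw [show Real.pi * k - Real.pi * x = Real.pi * -(x - k) by ring, abs_mul,
          abs_of_pos hpi, abs_neg]
      linarith [e3 ▸ h5]
    have d2 : |Real.sin (Real.pi * k) + Real.sin (Real.pi * x)| ≤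
        |Real.sin (Real.pi * k)| + |Real.sin (Real.pi * x)| := abs_add_le _ _
    have e2 : |sb ^ 2 - sa ^ 2| ≤ 4 * (Real.pi * |x - k|) *
        (|Real.sin (Real.pi * k)| + |Real.sin (Real.pi * x)|) := by
      rw [e1, abs_mul, abs_mul, show |(4:ℝ)| = 4 by norm_num]
      calc 4 * |Real.sin (Real.pi * k) - Real.sin (Real.pi * x)| *
            |Real.sin (Real.pi * k) + Real.sin (Real.pi * x)|
          ≤ 4 * (Real.pi * |x - k|) * |Real.sin (Real.pi * k) + Real.sin (Real.pi * x)| := by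
            apply mul_le_mul_of_nonneg_right _ (abs_nonneg _)
            linarith
        _ ≤ 4 * (Real.pi * |x - k|) * (|Real.sin (Real.pi * k)| + |Real.sin (Real.pi * x)|) :=
            mul_le_mul_of_nonneg_left d2 (by positivity)
    have e4 : |sb - sa| * (sb + sa) = |sb ^ 2 - sa ^ 2| := by
      rw [show sb ^ 2 - sa ^ 2 = (sb - sa) * (sb + sa) by ring, abs_mul,
        abs_of_pos (by linarith : (0:ℝ) < sb + sa)]
    have e5 : 2 * (|Real.sin (Real.pi * k)| + |Real.sin (Real.pi * x)|) ≤ sb + sa := by linarith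
    have e6 : |sb - sa| * (sb + sa) ≤ 2 * Real.pi * |x - k| * (sb + sa) := by
      rw [e4]
      calc |sb ^ 2 - sa ^ 2| ≤ 4 * (Real.pi * |x - k|) *
            (|Real.sin (Real.pi * k)| + |Real.sin (Real.pi * x)|) := e2
        _ = 2 * Real.pi * |x - k| * (2 * (|Real.sin (Real.pi * k)| + |Real.sin (Real.pi * x)|)) := by
            ring
        _ ≤ 2 * Real.pi * |x - k| * (sb + sa) :=
            mul_le_mul_of_nonneg_left e5 (by positivity)
    exact le_of_mul_le_mul_right e6 (by linarith : (0:ℝ) < sb + sa)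
  -- main algebraic split
  have heq : gF B x - gF B k = (A * sb - Ak * sa) / (2 * (sa * sb)) := by
    rw [show gF B x = A / (2 * sa) from rfl, show gF B k = Ak / (2 * sb) from rfl]
    field_simp [hsa0.ne', hsb0.ne']
  have hnum : |A * sb - Ak * sa| ≤ 16 * Real.pi ^ 2 * |x - k| * sb := by
    have e1 : A * sb - Ak * sa = (A - Ak) * sb + Ak * (sb - sa) := by ring
    calc |A * sb - Ak * sa| ≤ |A - Ak| * sb + |Ak| * |sb - sa| := by
          rw [e1]
          refine (abs_add_le _ _).trans ?_
          rw [abs_mul, abs_mul, abs_of_pos hsb0]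
      _ ≤ (8 * Real.pi ^ 2 * |x - k|) * sb + (4 * Real.pi * sb) * (2 * Real.pi * |x - k|) := by
          have t1 : |A - Ak| * sb ≤ (8 * Real.pi ^ 2 * |x - k|) * sb :=
            mul_le_mul_of_nonneg_right hAd hsb0.le
          have t2 : |Ak| * |sb - sa| ≤ (4 * Real.pi * sb) * (2 * Real.pi * |x - k|) :=
            mul_le_mul hAkb hsd (abs_nonneg _) (by positivity)
          linarith
      _ = 16 * Real.pi ^ 2 * |x - k| * sb := by ring
  rw [heq, abs_div, abs_of_pos (by positivity : (0:ℝ) < 2 * (sa * sb)),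
    div_le_div_iff₀ (by positivity) hk0]
  have hkle : |k| ≤ 3 / 2 * sa := by linarith
  have hM : (0:ℝ) ≤ |x - k| * sa * sb :=
    mul_nonneg (mul_nonneg (abs_nonneg _) hsa0.le) hsb0.le
  calc |A * sb - Ak * sa| * |k| ≤ (16 * Real.pi ^ 2 * |x - k| * sb) * (3 / 2 * sa) :=
        mul_le_mul hnum hkle (abs_nonneg k)
          (mul_nonneg (mul_nonneg (by positivity) (abs_nonneg _)) hsb0.le)
    _ = 24 * Real.pi ^ 2 * (|x - k| * sa * sb) := by ring
    _ ≤ 24 * 16 * (|x - k| * sa * sb) :=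
        mul_le_mul_of_nonneg_right (by nlinarith) hM
    _ ≤ 400 * |x - k| * (2 * (sa * sb)) := by nlinarith [hM]

set_option maxHeartbeats 1000000 in
lemma main_est {B k : ℝ} (hk0 : 0 < |k|) (hk : |k| ≤ 1 / 2) (y : ℝ) (hy : |y| ≤ |k| / 2) :
    |sqF B (k + y) - sqF B (k - y) - 2 * gF B k * y| ≤ 800 * |y| / |k| * |y| := by
  set D : ℝ → ℝ := fun t => sqF B (k + t) - sqF B (k - t) - 2 * gF B k * t with hD_def
  set D' : ℝ → ℝ := fun t => gF B (k + t) + gF B (k - t) - 2 * gF B k with hD'_def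
  have hmem0 : (0 : ℝ) ∈ Set.Icc (-|y|) |y| := by
    constructor <;> [linarith [abs_nonneg y]; exact abs_nonneg y]
  have hmemy : y ∈ Set.Icc (-|y|) |y| := ⟨neg_abs_le y, le_abs_self y⟩
  have hderiv : ∀ t ∈ Set.Icc (-|y|) |y|,
      HasDerivWithinAt D (D' t) (Set.Icc (-|y|) |y|) t := by
    intro t ht
    have ht' : |t| ≤ |y| := abs_le.mpr ⟨ht.1, ht.2⟩
    have hx1 : |(k + t) - k| ≤ |k| / 2 := by
      rw [add_sub_cancel_left]; linarith
    have hx2 : |(k - t) - k| ≤ |k| / 2 := by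
      rw [show (k - t) - k = -t by ring, abs_neg]; linarith
    have d1 : HasDerivAt (fun s : ℝ => sqF B (k + s)) (gF B (k + t)) t := by
      have hinner : HasDerivAt (fun s : ℝ => k + s) 1 t := by
        simpa using (hasDerivAt_id t).const_add k
      have := (hasDerivAt_sqF B (k + t) (u_region_pos hk0 hk hx1)).comp t hinner
      simpa [Function.comp_def] using this
    have d2 : HasDerivAt (fun s : ℝ => sqF B (k - s)) (-gF B (k - t)) t := by
      have hinner : HasDerivAt (fun s : ℝ => k - s) (-1 : ℝ) t := by
        simpa using (hasDerivAt_id t).const_sub k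
      have := (hasDerivAt_sqF B (k - t) (u_region_pos hk0 hk hx2)).comp t hinner
      simpa [Function.comp_def] using this
    have d3 : HasDerivAt (fun s : ℝ => 2 * gF B k * s) (2 * gF B k) t := by
      simpa using (hasDerivAt_id t).const_mul (2 * gF B k)
    have dD := (d1.sub d2).sub d3
    have : gF B (k + t) - -gF B (k - t) - 2 * gF B k = D' t := by
      rw [hD'_def]; ring
    rw [this] at dD
    exact dD.hasDerivWithinAt
  have hbound : ∀ t ∈ Set.Icc (-|y|) |y|, ‖D' t‖ ≤ 800 * |y| / |k| := by
    intro t ht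
    have ht' : |t| ≤ |y| := abs_le.mpr ⟨ht.1, ht.2⟩
    have hx1 : |(k + t) - k| ≤ |k| / 2 := by
      rw [add_sub_cancel_left]; linarith
    have hx2 : |(k - t) - k| ≤ |k| / 2 := by
      rw [show (k - t) - k = -t by ring, abs_neg]; linarith
    have key1 := key_lip (B := B) hk0 hk hx1
    have key2 := key_lip (B := B) hk0 hk hx2
    rw [add_sub_cancel_left] at key1
    rw [show (k - t) - k = -t by ring, abs_neg] at key2
    have e1 : D' t = (gF B (k + t) - gF B k) + (gF B (k - t) - gF B k) := by
      rw [hD'_def]; ring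
    rw [Real.norm_eq_abs, e1]
    have habs := abs_add_le (gF B (k + t) - gF B k) (gF B (k - t) - gF B k)
    have b1 : 400 * |t| / |k| ≤ 400 * |y| / |k| := by gcongr
    have b2 : 400 * |y| / |k| + 400 * |y| / |k| = 800 * |y| / |k| := by ring
    linarith
  have mvt := (convex_Icc (-|y|) |y|).norm_image_sub_le_of_norm_hasDerivWithin_le
    hderiv hbound hmem0 hmemy
  have hD0 : D 0 = 0 := by rw [hD_def]; simp
  rw [hD0, sub_zero, sub_zero, Real.norm_eq_abs, Real.norm_eq_abs] at mvt
  exact mvt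

theorem stmt_13' :
      ∀ B : ℝ, 0 ≤ B → ∀ ε : ℝ, ε ∈ Set.Ioo (0 : ℝ) 1 → ∀ i : ℕ, (i = 1 ∨ i = 2) →
        ∀ p k : ℝ, 0 < |k| → |k| ≤ 1 / 2 → ε * |p| < |k| →
          |(Real.sqrt (alphaHat (k + ε * p / 2) + B ^ 2 / 4) + (if i = 1 then B / 2 else -(B / 2)))
            - (Real.sqrt (alphaHat (k - ε * p / 2) + B ^ 2 / 4) + (if i = 1 then B / 2 else -(B / 2)))
            - ε * p * (deriv alphaHat k / (2 * Real.sqrt (alphaHat k + B ^ 2 / 4)))| ≤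
            200 * ε ^ 2 * p ^ 2 / |k| := by
  intro B hB ε hε i hi p k hk0 hk hεp
  have hε0 : 0 < ε := hε.1
  set y : ℝ := ε * p / 2 with hy_def
  have hyabs : |y| = ε * |p| / 2 := by
    rw [hy_def, abs_div, abs_mul, abs_of_pos hε0]
    norm_num
  have hy2 : |y| ≤ |k| / 2 := by rw [hyabs]; linarith
  have hv : deriv alphaHat k / (2 * Real.sqrt (alphaHat k + B ^ 2 / 4)) = gF B k := by
    rw [(hasDerivAt_alphaHat k).deriv]; rfl
  have hexpr : (Real.sqrt (alphaHat (k + ε * p / 2) + B ^ 2 / 4) + (if i = 1 then B / 2 else -(B / 2)))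
      - (Real.sqrt (alphaHat (k - ε * p / 2) + B ^ 2 / 4) + (if i = 1 then B / 2 else -(B / 2)))
      - ε * p * (deriv alphaHat k / (2 * Real.sqrt (alphaHat k + B ^ 2 / 4)))
      = sqF B (k + y) - sqF B (k - y) - 2 * gF B k * y := by
    rw [hv, hy_def]
    show Real.sqrt _ + _ - (Real.sqrt _ + _) - _ = Real.sqrt _ - Real.sqrt _ - _
    ring
  rw [hexpr]
  have h1 := main_est (B := B) hk0 hk y hy2
  have h2 : 800 * |y| / |k| * |y| = 200 * ε ^ 2 * p ^ 2 / |k| := by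
    rw [show (800 : ℝ) * |y| / |k| * |y| = 800 * (|y| * |y|) / |k| by ring,
      abs_mul_abs_self, hy_def]
    ring
  linarith [h2 ▸ h1]


/-- There is a constant `C > 0` such that for every `B ≥ 0`, `ε ∈ (0,1)`,
`i ∈ {1,2}`, `p ∈ ℝ` and `k` with `0 < |k| ≤ 1/2` and `ε|p| < |k|`,
`|ω_{i,B}(k + εp/2) − ω_{i,B}(k − εp/2) − εp·v_B(k)| ≤ C·ε²·p²/|k|`. -/
theorem stmt_13 :
    ∃ C : ℝ, 0 < C ∧
      ∀ B : ℝ, 0 ≤ B → ∀ ε : ℝ, ε ∈ Set.Ioo (0 : ℝ) 1 → ∀ i : ℕ, (i = 1 ∨ i = 2) →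
        ∀ p k : ℝ, 0 < |k| → |k| ≤ 1 / 2 → ε * |p| < |k| →
          |omegaF B i (k + ε * p / 2) - omegaF B i (k - ε * p / 2) - ε * p * vF B k| ≤
            C * ε ^ 2 * p ^ 2 / |k| := by
  refine ⟨200, by norm_num, ?_⟩
  intro B hB ε hε i hi p k hk0 hk hεp
  simpa only [omegaF, vF] using stmt_13' B hB ε hε i hi p k hk0 hk hεp
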